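/- (Robustness in model M1.) Suppose δ^D(x) ≠ 0 for every x ∈ 𝒳, and let f* : {0,1} × 𝒳 → ℝ be an arbitrary function with f*(z,x) ≠ 0 for all z, x (a possibly misspecified instrument density). Then Φ(f*, δ, δ^D, p_0^Y, p_0^D) = Δ, where the remaining nuisance functions are the true ones. -/

import Mathlib

open MeasureTheory

/-- Conditional mean of `W` given event `A`: `E[W | A] = (∫_A W dμ) / μ(A)`. -/
noncomputable def condMean {Ω : Type*} [MeasurableSpace Ω] (μ : Measure Ω)
    (W : Ω → ℝ) (A : Set Ω) : ℝ :=
  (∫ ω in A, W ω ∂μ) / (μ A).toReal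

/-- The multiply robust functional
`Φ(f*, δ*, δD*, pY*, pD*) = E[ ((2Z−1)/f*(Z,X)) (1/δD*(X))
  (Y − pY*(X) − D δ*(X) + pD*(X) δ*(X)) + δ*(X) ]`. -/
noncomputable def mrFunctional {Ω 𝒳 : Type*} [MeasurableSpace Ω] (μ : Measure Ω)
    (Z D Y : Ω → ℝ) (X : Ω → 𝒳)
    (fs : ℝ → 𝒳 → ℝ) (δs δDs pYs pDs : 𝒳 → ℝ) : ℝ :=
  ∫ ω, ((2 * Z ω - 1) / fs (Z ω) (X ω)) * (1 / δDs (X ω)) *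
      (Y ω - pYs (X ω) - D ω * δs (X ω) + pDs (X ω) * δs (X ω)) + δs (X ω) ∂μ

/-- robustness in model `M1`: with the true nuisance functions
`δ, δ^D, p_0^Y, p_0^D` and an arbitrary nonvanishing (possibly misspecified)
instrument density `f*`, the multiply robust functional recovers the average Wald
estimand: `Φ(f*, δ, δ^D, p_0^Y, p_0^D) = Δ`. -/
theorem mr_robust_M1
    {Ω : Type*} [MeasurableSpace Ω] (μ : Measure Ω) [IsProbabilityMeasure μ]
    {𝒳 : Type*} [Fintype 𝒳] [MeasurableSpace 𝒳] [MeasurableSingletonClass 𝒳]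
    (Z D Y : Ω → ℝ) (X : Ω → 𝒳)
    (hZmeas : Measurable Z) (hDmeas : Measurable D) (hXmeas : Measurable X)
    (hYmeas : Measurable Y)
    (hZ01 : ∀ ω, Z ω = 0 ∨ Z ω = 1) (hD01 : ∀ ω, D ω = 0 ∨ D ω = 1)
    (hYint : Integrable Y μ)
    -- positivity
    (hPos : ∀ (z : ℝ), (z = 0 ∨ z = 1) → ∀ (x : 𝒳),
      0 < μ ({ω | Z ω = z} ∩ {ω | X ω = x}))
    -- f(z | x) = μ(Z = z | X = x)
    (f : ℝ → 𝒳 → ℝ)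
    (hf : ∀ (z : ℝ) (x : 𝒳),
      f z x = (μ ({ω | Z ω = z} ∩ {ω | X ω = x})).toReal / (μ {ω | X ω = x}).toReal)
    -- p_z^Y, p_z^D, δ^Y, δ^D, and the conditional Wald estimand δ
    (pY pD : ℝ → 𝒳 → ℝ)
    (hpY : ∀ (z : ℝ) (x : 𝒳),
      pY z x = condMean μ Y ({ω | Z ω = z} ∩ {ω | X ω = x}))
    (hpD : ∀ (z : ℝ) (x : 𝒳),
      pD z x = condMean μ D ({ω | Z ω = z} ∩ {ω | X ω = x}))
    (δY δD δ : 𝒳 → ℝ)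
    (hδY : ∀ x, δY x = pY 1 x - pY 0 x)
    (hδD : ∀ x, δD x = pD 1 x - pD 0 x)
    (hδDne : ∀ x, δD x ≠ 0)
    (hδ : ∀ x, δ x = δY x / δD x)
    -- the average Wald estimand
    (Δ : ℝ) (hΔ : Δ = ∑ x : 𝒳, (μ {ω | X ω = x}).toReal * δ x)
    -- an arbitrary nonvanishing candidate instrument density
    (fs : ℝ → 𝒳 → ℝ)
    (hfs : ∀ (z : ℝ), (z = 0 ∨ z = 1) → ∀ (x : 𝒳), fs z x ≠ 0) :
    mrFunctional μ Z D Y X fs δ δD (fun x => pY 0 x) (fun x => pD 0 x) = Δ := by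
  classical
  -- the cells
  set A : ℝ → 𝒳 → Set Ω := fun z x => {ω | Z ω = z} ∩ {ω | X ω = x} with hA
  have hAmeas : ∀ z x, MeasurableSet (A z x) := fun z x =>
    (hZmeas (measurableSet_singleton z)).inter (hXmeas (measurableSet_singleton x))
  set m : ℝ → 𝒳 → ℝ := fun z x => (μ (A z x)).toReal with hm
  have hmpos : ∀ (z : ℝ), (z = 0 ∨ z = 1) → ∀ x, 0 < m z x := fun z hz x =>
    ENNReal.toReal_pos (hPos z hz x).ne' (measure_ne_top μ _)
  -- integrals of Y and D over cells
  have hYA : ∀ (z : ℝ), (z = 0 ∨ z = 1) → ∀ x, ∫ ω in A z x, Y ω ∂μ = pY z x * m z x := by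
    intro z hz x
    have h := hpY z x
    rw [condMean] at h
    rw [h]; exact (div_mul_cancel₀ _ (hmpos z hz x).ne').symm
  have hDA : ∀ (z : ℝ), (z = 0 ∨ z = 1) → ∀ x, ∫ ω in A z x, D ω ∂μ = pD z x * m z x := by
    intro z hz x
    have h := hpD z x
    rw [condMean] at h
    rw [h]; exact (div_mul_cancel₀ _ (hmpos z hz x).ne').symm
  -- D is integrable
  have hDint : Integrable D μ :=
    (integrable_const (1 : ℝ)).mono' hDmeas.aestronglyMeasurable
      (Filter.Eventually.of_forall fun ω => by rcases hD01 ω with h | h <;> simp [h])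
  -- the cell-wise constant coefficient and cell-wise integrand
  set k : ℝ → 𝒳 → ℝ := fun z x => (2 * z - 1) / fs z x * (1 / δD x) with hk
  set F : ℝ → 𝒳 → Ω → ℝ := fun z x ω =>
    k z x * (Y ω - pY 0 x - D ω * δ x + pD 0 x * δ x) + δ x with hF
  have hFrw : ∀ (z : ℝ) (x : 𝒳), F z x = fun ω =>
      k z x * Y ω - k z x * δ x * D ω + (k z x * (pD 0 x * δ x - pY 0 x) + δ x) := by
    intro z x; funext ω; simp only [hF]; ring
  have hFint : ∀ (z : ℝ) (x : 𝒳), Integrable (F z x) μ := by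
    intro z x
    rw [hFrw]
    exact (((hYint.const_mul _).sub (hDint.const_mul _)).add (integrable_const _))
  -- the integrand equals a finite sum of indicators of cells
  have hgG : (fun ω => ((2 * Z ω - 1) / fs (Z ω) (X ω)) * (1 / δD (X ω)) *
      (Y ω - pY 0 (X ω) - D ω * δ (X ω) + pD 0 (X ω) * δ (X ω)) + δ (X ω)) =
      fun ω => ∑ x : 𝒳, ((A 1 x).indicator (F 1 x) ω + (A 0 x).indicator (F 0 x) ω) := by
    funext ω
    rw [Finset.sum_eq_single_of_mem (X ω) (Finset.mem_univ _)]
    · rcases hZ01 ω with h | h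
      · have h1 : ω ∉ A 1 (X ω) := by simp [hA, h]
        have h0 : ω ∈ A 0 (X ω) := by simp [hA, h]
        rw [Set.indicator_of_notMem h1, Set.indicator_of_mem h0, hF, hk, h]
        ring
      · have h1 : ω ∈ A 1 (X ω) := by simp [hA, h]
        have h0 : ω ∉ A 0 (X ω) := by simp [hA, h]
        rw [Set.indicator_of_mem h1, Set.indicator_of_notMem h0, hF, hk, h]
        ring
    · intro x _ hx
      have h1 : ω ∉ A 1 x := fun hmem => hx hmem.2.symm
      have h0 : ω ∉ A 0 x := fun hmem => hx hmem.2.symm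
      rw [Set.indicator_of_notMem h1, Set.indicator_of_notMem h0, add_zero]
  -- value of the cell integrals
  have hcell : ∀ (z : ℝ), (z = 0 ∨ z = 1) → ∀ x, ∫ ω in A z x, F z x ω ∂μ =
      k z x * (pY z x - pY 0 x - pD z x * δ x + pD 0 x * δ x) * m z x + δ x * m z x := by
    intro z hz x
    simp only [hFrw]
    rw [integral_add (f := fun ω => k z x * Y ω - k z x * δ x * D ω)
        (g := fun _ => k z x * (pD 0 x * δ x - pY 0 x) + δ x)
        (((hYint.const_mul _).sub (hDint.const_mul _)).integrableOn)
        (integrableOn_const (measure_ne_top μ _)),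
      integral_sub (f := fun ω => k z x * Y ω) (g := fun ω => k z x * δ x * D ω)
        ((hYint.const_mul _).integrableOn) ((hDint.const_mul _).integrableOn),
      integral_const_mul, integral_const_mul, setIntegral_const, hYA z hz x, hDA z hz x]
    simp only [smul_eq_mul, ← hm, show μ.real (A z x) = m z x from rfl]
    ring
  have hcell0 : ∀ x, ∫ ω in A 0 x, F 0 x ω ∂μ = δ x * m 0 x := by
    intro x
    rw [hcell 0 (Or.inl rfl) x]
    ring_nf
  have hδδD : ∀ x, δ x * δD x = δY x := by
    intro x; rw [hδ x, div_mul_cancel₀ _ (hδDne x)]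
  have hcell1 : ∀ x, ∫ ω in A 1 x, F 1 x ω ∂μ = δ x * m 1 x := by
    intro x
    rw [hcell 1 (Or.inr rfl) x]
    have hb : pY 1 x - pY 0 x - pD 1 x * δ x + pD 0 x * δ x = 0 := by
      have h1 : pY 1 x - pY 0 x = δY x := (hδY x).symm
      have h2 : pD 1 x * δ x - pD 0 x * δ x = δY x := by
        have := hδδD x
        rw [hδD x] at this
        nlinarith [this]
      nlinarith [h1, h2]
    rw [hb]
    ring
  -- masses add up over z
  have hmass : ∀ x, m 1 x + m 0 x = (μ {ω | X ω = x}).toReal := by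
    intro x
    have hdisj : Disjoint (A 1 x) (A 0 x) := by
      refine Set.disjoint_left.2 fun ω h1 h0 => ?_
      have := h1.1; have := h0.1
      simp only [hA, Set.mem_inter_iff, Set.mem_setOf_eq] at h1 h0
      exact one_ne_zero (h1.1.symm.trans h0.1)
    have hun : A 1 x ∪ A 0 x = {ω | X ω = x} := by
      ext ω
      simp only [hA, Set.mem_union, Set.mem_inter_iff, Set.mem_setOf_eq]
      constructor
      · rintro (⟨_, h⟩ | ⟨_, h⟩) <;> exact h
      · intro h; rcases hZ01 ω with hz | hz
        · exact Or.inr ⟨hz, h⟩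
        · exact Or.inl ⟨hz, h⟩
    rw [hm, ← ENNReal.toReal_add (measure_ne_top μ _) (measure_ne_top μ _),
      ← measure_union hdisj (hAmeas 0 x), hun]
  -- put everything together
  rw [mrFunctional, hgG, integral_finset_sum (μ := μ)
    (f := fun x ω => (A 1 x).indicator (F 1 x) ω + (A 0 x).indicator (F 0 x) ω) Finset.univ
    (fun x _ => ((hFint 1 x).indicator (hAmeas 1 x)).add ((hFint 0 x).indicator (hAmeas 0 x))), hΔ]
  refine Finset.sum_congr rfl fun x _ => ?_
  rw [integral_add (f := fun ω => (A 1 x).indicator (F 1 x) ω)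
      (g := fun ω => (A 0 x).indicator (F 0 x) ω)
      ((hFint 1 x).indicator (hAmeas 1 x)) ((hFint 0 x).indicator (hAmeas 0 x)),
    integral_indicator (hAmeas 1 x), integral_indicator (hAmeas 0 x),
    hcell1 x, hcell0 x, ← mul_add, hmass x, mul_comm]
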